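/- Define Q̃_i(X) = e_i(x₁,...,x_n) (elementary symmetric polynomial) and for i ≥ j ≥ 0, Q̃_{i,j}(X) = Q̃_i Q̃_j + 2 ∑_{k=1}^{j} (-1)^k Q̃_{i+k} Q̃_{j-k}. Then for every i with 1 ≤ i ≤ n, Q̃_{i,i}(X) equals e_i(x₁², ..., x_n²), the i-th elementary symmetric polynomial in the squares of the variables. -/

import Mathlib

open MvPolynomial

/-- The `i`-th elementary symmetric polynomial in the variables `{X j : j ∈ S}`,
i.e. `Q̃_i` on the variable set `S`. -/
noncomputable def Qt (S : Finset ℕ) (i : ℕ) : MvPolynomial ℕ ℤ :=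
  ∑ t ∈ Finset.powersetCard i S, ∏ j ∈ t, X j

/-- The two-row `Q̃`-polynomial
`Q̃_{i,j} = Q̃_i Q̃_j + 2 ∑_{k=1}^{j} (-1)^k Q̃_{i+k} Q̃_{j-k}` (for `i ≥ j`). -/
noncomputable def Qtp (S : Finset ℕ) (i j : ℕ) : MvPolynomial ℕ ℤ :=
  Qt S i * Qt S j +
    2 * ∑ k ∈ Finset.Icc 1 j, (-1 : MvPolynomial ℕ ℤ) ^ k * Qt S (i + k) * Qt S (j - k)

/-- Fuel-based Laplace (Pfaffian) recursion for `Q̃_λ` on a list of parts of even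
length: `Q̃_ν = ∑_{j} (-1)^{j-1} Q̃_{ν_j,ν_r} Q̃_{ν∖{ν_j,ν_r}}`. -/
noncomputable def Qpf (S : Finset ℕ) : ℕ → List ℕ → MvPolynomial ℕ ℤ
  | 0, _ => 1
  | fuel + 1, l =>
    if l.length < 2 then 1
    else
      ∑ j ∈ Finset.range (l.length - 1),
        (-1 : MvPolynomial ℕ ℤ) ^ j * Qtp S (l.getD j 0) (l.getLast?.getD 0) *
          Qpf S fuel (l.dropLast.eraseIdx j)

/-- `Q̃_λ` for a partition `λ` (list of parts), padding with a zero part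
to make the length even. -/
noncomputable def Qlam (S : Finset ℕ) (l : List ℕ) : MvPolynomial ℕ ℤ :=
  Qpf S (l.length + 1) (if Even l.length then l else l ++ [0])

section QtpAux
open Finset

lemma npp (a b : ℕ) (h : a % 2 = b % 2) : (-1 : MvPolynomial ℕ ℤ) ^ a = (-1) ^ b := by
  conv_lhs => rw [← Nat.div_add_mod a 2]
  conv_rhs => rw [← Nat.div_add_mod b 2]
  rw [h]
  simp [pow_add, pow_mul]

lemma coeff_prod_aux (S : Finset ℕ) (f : ℕ → MvPolynomial ℕ ℤ) (d : ℕ) (hd : 0 < d) (k : ℕ) :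
    (∏ j ∈ S, (Polynomial.C (f j) * Polynomial.X ^ d + 1)).coeff (d * k)
      = ∑ t ∈ Finset.powersetCard k S, ∏ j ∈ t, f j := by
  rw [Finset.prod_add, Polynomial.finset_sum_coeff,
    Finset.powersetCard_eq_filter, Finset.sum_filter]
  apply Finset.sum_congr rfl
  intro t ht
  rw [Finset.prod_const_one, mul_one, Finset.prod_mul_distrib, ← map_prod,
    Finset.prod_const, ← pow_mul, Polynomial.coeff_C_mul, Polynomial.coeff_X_pow]
  have : d * t.card = d * k ↔ t.card = k := by
    constructor
    · intro h; exact Nat.eq_of_mul_eq_mul_left hd h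
    · intro h; rw [h]
  split_ifs with h1 h2 h3 <;> simp_all

lemma prodneg (t : Finset ℕ) (g : ℕ → MvPolynomial ℕ ℤ) :
    ∏ j ∈ t, -g j = (-1) ^ t.card * ∏ j ∈ t, g j := by
  rw [← Finset.prod_const (-1 : MvPolynomial ℕ ℤ), ← Finset.prod_mul_distrib]
  simp [neg_one_mul]

lemma key (S : Finset ℕ) (i : ℕ) :
    ∑ k ∈ Finset.range (2 * i + 1), (-1 : MvPolynomial ℕ ℤ) ^ k * Qt S k * Qt S (2 * i - k)
      = (-1) ^ i * ∑ t ∈ Finset.powersetCard i S, ∏ j ∈ t, (X j : MvPolynomial ℕ ℤ) ^ 2 := by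
  have hP : ∀ k, (∏ j ∈ S, (Polynomial.C (X j : MvPolynomial ℕ ℤ) * Polynomial.X ^ 1 + 1)).coeff k
      = Qt S k := by
    intro k
    have := coeff_prod_aux S (fun j => X j) 1 one_pos k
    simpa [Qt] using this
  have hM : ∀ k, (∏ j ∈ S, (Polynomial.C (-(X j : MvPolynomial ℕ ℤ)) * Polynomial.X ^ 1 + 1)).coeff k
      = (-1) ^ k * Qt S k := by
    intro k
    have := coeff_prod_aux S (fun j => -(X j)) 1 one_pos k
    rw [one_mul] at this
    rw [this, Qt, Finset.mul_sum]
    rw [Finset.sum_congr rfl]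
    intro t ht
    rw [prodneg]
    rw [Finset.mem_powersetCard] at ht
    rw [ht.2]
  have hprod : (∏ j ∈ S, (Polynomial.C (X j : MvPolynomial ℕ ℤ) * Polynomial.X ^ 1 + 1)) *
      (∏ j ∈ S, (Polynomial.C (-(X j : MvPolynomial ℕ ℤ)) * Polynomial.X ^ 1 + 1))
      = ∏ j ∈ S, (Polynomial.C (-((X j : MvPolynomial ℕ ℤ)) ^ 2) * Polynomial.X ^ 2 + 1) := by
    rw [← Finset.prod_mul_distrib]
    apply Finset.prod_congr rfl
    intro j _
    rw [map_neg, map_neg, map_pow]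
    ring
  have hc := congrArg (fun p => Polynomial.coeff p (2 * i)) hprod
  beta_reduce at hc
  rw [coeff_prod_aux S (fun j => -((X j) ^ 2)) 2 two_pos i] at hc
  rw [Polynomial.coeff_mul, Finset.Nat.sum_antidiagonal_eq_sum_range_succ_mk] at hc
  have hrhs : ∑ t ∈ Finset.powersetCard i S, ∏ j ∈ t, (-((X j : MvPolynomial ℕ ℤ)) ^ 2)
      = (-1) ^ i * ∑ t ∈ Finset.powersetCard i S, ∏ j ∈ t, (X j : MvPolynomial ℕ ℤ) ^ 2 := by
    rw [Finset.mul_sum]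
    apply Finset.sum_congr rfl
    intro t ht
    rw [prodneg]
    rw [Finset.mem_powersetCard] at ht
    rw [ht.2]
  rw [hrhs] at hc
  rw [← hc]
  apply Finset.sum_congr rfl
  intro k hk
  rw [Finset.mem_range] at hk
  rw [hP, hM]
  have hpar : (2 * i - k) % 2 = k % 2 := by omega
  rw [npp _ _ hpar]
  ring

theorem Qtp_diag (S : Finset ℕ) (i : ℕ) :
    Qtp S i i = ∑ t ∈ Finset.powersetCard i S, ∏ j ∈ t, (X j : MvPolynomial ℕ ℤ) ^ 2 := by
  set f : ℕ → MvPolynomial ℕ ℤ := fun k => (-1) ^ k * Qt S k * Qt S (2 * i - k) with hf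
  have hkey := key S i
  have hsq : ((-1 : MvPolynomial ℕ ℤ) ^ i) * (-1) ^ i = 1 := by
    rw [← pow_add, npp (i + i) 0 (by omega)]; simp
  have h1 : ∑ k ∈ Finset.range (2 * i + 1), f k
      = ∑ k ∈ Finset.range i, f k + ∑ k ∈ Finset.Ico i (2 * i + 1), f k := by
    rw [Finset.range_eq_Ico, Finset.range_eq_Ico]
    exact (Finset.sum_Ico_consecutive f (Nat.zero_le i) (show i ≤ 2 * i + 1 by omega)).symm
  have h2 : ∑ k ∈ Finset.Ico i (2 * i + 1), f k = ∑ m ∈ Finset.range (i + 1), f (i + m) := by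
    rw [Finset.sum_Ico_eq_sum_range, show 2 * i + 1 - i = i + 1 from by omega]
  have h3 : ∑ m ∈ Finset.range (i + 1), f (i + m)
      = (∑ m ∈ Finset.range i, f (i + (m + 1))) + f i := by
    rw [Finset.sum_range_succ' (fun m => f (i + m)) i]
    simp
  have h4 : ∑ k ∈ Finset.range i, f k = ∑ m ∈ Finset.range i, f (i - 1 - m) :=
    (Finset.sum_range_reflect f i).symm
  have h5 : ∀ m ∈ Finset.range i, f (i - 1 - m) = f (i + (m + 1)) := by
    intro m hm
    rw [Finset.mem_range] at hm
    simp only [hf]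
    rw [npp (i - 1 - m) (i + (m + 1)) (by omega)]
    rw [show 2 * i - (i - 1 - m) = i + (m + 1) by omega,
      show 2 * i - (i + (m + 1)) = i - 1 - m by omega]
    ring
  have htot : ∑ k ∈ Finset.range (2 * i + 1), f k
      = f i + 2 * ∑ m ∈ Finset.range i, f (i + (m + 1)) := by
    rw [h1, h2, h3, h4, Finset.sum_congr rfl h5]
    ring
  have hIcc : ∑ k ∈ Finset.Icc 1 i, (-1 : MvPolynomial ℕ ℤ) ^ k * Qt S (i + k) * Qt S (i - k)
      = ∑ m ∈ Finset.range i, (-1 : MvPolynomial ℕ ℤ) ^ (1 + m) * Qt S (i + (1 + m)) * Qt S (i - (1 + m)) := by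
    rw [← Finset.Ico_add_one_right_eq_Icc, Finset.sum_Ico_eq_sum_range]
    simp
  have hterm : ∀ m ∈ Finset.range i, ((-1 : MvPolynomial ℕ ℤ) ^ i) * f (i + (m + 1))
      = (-1) ^ (1 + m) * Qt S (i + (1 + m)) * Qt S (i - (1 + m)) := by
    intro m hm
    simp only [hf]
    rw [show 2 * i - (i + (m + 1)) = i - (1 + m) by omega,
      show i + (m + 1) = i + (1 + m) by omega, ← mul_assoc, ← mul_assoc, ← pow_add,
      npp (i + (i + (1 + m))) (1 + m) (by omega)]
  have hfi : ((-1 : MvPolynomial ℕ ℤ) ^ i) * f i = Qt S i * Qt S i := by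
    simp only [hf]
    rw [show 2 * i - i = i by omega, ← mul_assoc, ← mul_assoc, ← pow_add,
      npp (i + i) 0 (by omega)]
    simp
  calc Qtp S i i
      = ((-1 : MvPolynomial ℕ ℤ) ^ i) * ∑ k ∈ Finset.range (2 * i + 1), f k := by
        rw [Qtp, hIcc, htot, ← hfi, ← Finset.sum_congr rfl hterm, ← Finset.mul_sum]
        ring
    _ = _ := by rw [hkey, ← mul_assoc, hsq, one_mul]

end QtpAux

/-- `Q̃_{i,i}(X) = e_i(x₁², …, x_n²)` for `1 ≤ i ≤ n`, in `ℤ[x₁,…,x_n]`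
(the variable set being `X = {X 0, …, X (n-1)}`). -/
theorem Qtp_diag_eq_esymm_squares (n i : ℕ) (h1 : 1 ≤ i) (h2 : i ≤ n) :
    Qtp (Finset.range n) i i
      = ∑ t ∈ Finset.powersetCard i (Finset.range n), ∏ j ∈ t, (X j : MvPolynomial ℕ ℤ) ^ 2 :=
  Qtp_diag (Finset.range n) i
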